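/- Under the hypotheses of the eigenvalue localization theorem, the spectral condition number of B_α A_α satisfies κ(B_α A_α) ≤ r₃/r₂ (≈ 4.089), uniformly in α > 0, where r₂ and r₃ are the middle and largest roots of r(λ) = (1−λ) − λ(1 + λ − λ²). Moreover, if K has a nontrivial kernel, then the roots of r are eigenvalues of B_α A_α and the bound is attained. -/

import Mathlib

/-!
STATEMENT 15: uniform condition number bound κ(B_α A_α) ≤ r₃/r₂ ≈ 4.089.
Same setup as the eigenvalue localization theorem (duals identified via the
inner products; M SPD, K self-adjoint positive semi-definite, K + R positive
definite with R = A'M⁻¹A).  Every generalized eigenvalue λ of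
A_α x = λ B_α⁻¹ x satisfies r₂ ≤ |λ| ≤ r₃, where r₂ < r₃ are the middle and
largest roots of r(λ) = 1-2λ-λ²+λ³; hence the spectral condition number,
the ratio of the largest to the smallest eigenvalue modulus, is ≤ r₃/r₂,
uniformly in α > 0.  Moreover, if K has a nontrivial kernel, every root of r
is a generalized eigenvalue, so the bound is attained.
-/

open scoped RealInnerProductSpace

/-- Localization of the roots of `1 - 2x - x² + x³`. -/
lemma loc15 (x : ℝ) (hx : 1 - 2*x - x^2 + x^3 = 0) :
    (-1.25 < x ∧ x < -1.24) ∨ (0.444 < x ∧ x < 0.45) ∨ (1.8 < x ∧ x < 1.803) := by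
  rcases lt_or_ge x (-1.24) with h1 | h1
  · left
    refine ⟨?_, h1⟩
    nlinarith [sq_nonneg (x + 1.25), sq_nonneg x, sq_nonneg (x+1)]
  rcases lt_or_ge x 0.45 with h2 | h2
  · right; left
    refine ⟨?_, h2⟩
    nlinarith [sq_nonneg (x - 0.444), sq_nonneg x, sq_nonneg (x+0.4)]
  right; right
  have h3 : 1.8 < x := by
    by_contra hc
    push_neg at hc
    nlinarith [mul_nonneg (mul_nonneg (by linarith : (0:ℝ) ≤ x - 0.45) (by linarith : (0:ℝ) ≤ 1.8 - x)) (by linarith : (0:ℝ) ≤ x - 0.45), mul_nonneg (by linarith : (0:ℝ) ≤ x - 0.45) (by linarith : (0:ℝ) ≤ 1.8 - x)]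
  refine ⟨h3, ?_⟩
  nlinarith [sq_nonneg (x - 1.803), sq_nonneg x, sq_nonneg (x-2)]

/-- Each localization interval contains at most one root. -/
lemma uniq15 (s t : ℝ) (hs : 1 - 2*s - s^2 + s^3 = 0) (ht : 1 - 2*t - t^2 + t^3 = 0)
    (h : (-1.25 < s ∧ s < -1.24 ∧ -1.25 < t ∧ t < -1.24) ∨
         (0.444 < s ∧ s < 0.45 ∧ 0.444 < t ∧ t < 0.45) ∨
         (1.8 < s ∧ s < 1.803 ∧ 1.8 < t ∧ t < 1.803)) : s = t := by
  have key : (s - t) * (s^2 + s*t + t^2 - s - t - 2) = 0 := by linear_combination hs - ht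
  rcases mul_eq_zero.mp key with h0 | h0
  · linarith
  · exfalso
    rcases h with ⟨a,b,c,d⟩ | ⟨a,b,c,d⟩ | ⟨a,b,c,d⟩
    · nlinarith
    · nlinarith
    · nlinarith

lemma golden15 (lam : ℝ) (h : lam^2 - lam - 1 = 0) : 0.45 ≤ |lam| ∧ |lam| ≤ 1.8 := by
  rcases abs_cases lam with ⟨he, hs⟩ | ⟨he, hs⟩ <;> rw [he] <;> constructor <;> nlinarith

/-- Locations of the middle and largest roots. -/
lemma intervals15 (r₁ r₂ r₃ : ℝ) (hr₁₂ : r₁ < r₂) (hr₂₃ : r₂ < r₃)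
    (hroot₁ : 1 - 2*r₁ - r₁^2 + r₁^3 = 0)
    (hroot₂ : 1 - 2*r₂ - r₂^2 + r₂^3 = 0)
    (hroot₃ : 1 - 2*r₃ - r₃^2 + r₃^3 = 0) :
    (0.444 < r₂ ∧ r₂ < 0.45) ∧ (1.8 < r₃ ∧ r₃ < 1.803) := by
  have l1 := loc15 r₁ hroot₁
  have l2 := loc15 r₂ hroot₂
  have l3 := loc15 r₃ hroot₃
  have h3 : 1.8 < r₃ ∧ r₃ < 1.803 := by
    rcases l3 with ⟨a, b⟩ | ⟨a, b⟩ | h3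
    · -- r₃ in I₁, then r₂ there too
      rcases l2 with ⟨c, d⟩ | ⟨c, d⟩ | ⟨c, d⟩
      · exact absurd (uniq15 r₂ r₃ hroot₂ hroot₃ (Or.inl ⟨c, d, a, b⟩)) (ne_of_lt hr₂₃)
      · linarith
      · linarith
    · -- r₃ in I₂
      rcases l2 with ⟨c, d⟩ | ⟨c, d⟩ | ⟨c, d⟩
      · rcases l1 with ⟨e, g⟩ | ⟨e, g⟩ | ⟨e, g⟩
        · exact absurd (uniq15 r₁ r₂ hroot₁ hroot₂ (Or.inl ⟨e, g, c, d⟩)) (ne_of_lt hr₁₂)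
        · linarith
        · linarith
      · exact absurd (uniq15 r₂ r₃ hroot₂ hroot₃ (Or.inr (Or.inl ⟨c, d, a, b⟩))) (ne_of_lt hr₂₃)
      · linarith
    · exact h3
  refine ⟨?_, h3⟩
  rcases l2 with ⟨c, d⟩ | h2 | ⟨c, d⟩
  · rcases l1 with ⟨e, g⟩ | ⟨e, g⟩ | ⟨e, g⟩
    · exact absurd (uniq15 r₁ r₂ hroot₁ hroot₂ (Or.inl ⟨e, g, c, d⟩)) (ne_of_lt hr₁₂)
    · linarith
    · linarith
  · exact h2
  · exact absurd (uniq15 r₂ r₃ hroot₂ hroot₃ (Or.inr (Or.inr ⟨c, d, h3.1, h3.2⟩))) (ne_of_lt hr₂₃)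

/-- The key scalar inequality behind the eigenvalue localization. -/
lemma key15 (r₂ r₃ lam k m α : ℝ)
    (hr2a : 0.444 < r₂) (hr2b : r₂ < 0.45)
    (hr3a : 1.8 < r₃) (hr3b : r₃ < 1.803)
    (hroot₂ : 1 - 2*r₂ - r₂^2 + r₂^3 = 0)
    (hroot₃ : 1 - 2*r₃ - r₃^2 + r₃^3 = 0)
    (hk : 0 ≤ k) (hm : 0 < m) (hα : 0 < α)
    (hE : (1 - lam) * k = (α * m) * ((lam^2 - lam - 1) * (1 - 2*lam - lam^2 + lam^3))) :
    r₂ ≤ |lam| ∧ |lam| ≤ r₃ := by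
  by_cases hc0 : lam^2 - lam - 1 = 0
  · have := golden15 lam hc0
    constructor
    · linarith [this.1]
    · linarith [this.2]
  by_cases hp0 : 1 - 2*lam - lam^2 + lam^3 = 0
  · rcases loc15 lam hp0 with ⟨a, b⟩ | ⟨a, b⟩ | ⟨a, b⟩
    · have he : |lam| = -lam := abs_of_neg (by linarith)
      rw [he]; constructor <;> linarith
    · have he : lam = r₂ := uniq15 lam r₂ hp0 hroot₂ (Or.inr (Or.inl ⟨a, b, hr2a, hr2b⟩))
      rw [he, abs_of_pos (by linarith : (0:ℝ) < r₂)]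
      constructor <;> linarith
    · have he : lam = r₃ := uniq15 lam r₃ hp0 hroot₃ (Or.inr (Or.inr ⟨a, b, hr3a, hr3b⟩))
      rw [he, abs_of_pos (by linarith : (0:ℝ) < r₃)]
      constructor <;> linarith
  have hcp : (lam^2 - lam - 1) * (1 - 2*lam - lam^2 + lam^3) ≠ 0 := mul_ne_zero hc0 hp0
  have hkpos : 0 < k := by
    rcases hk.lt_or_eq with h | h
    · exact h
    · exfalso; apply hcp
      have : (α * m) * ((lam^2 - lam - 1) * (1 - 2*lam - lam^2 + lam^3)) = 0 := by
        rw [← hE, ← h]; ring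
      exact (mul_eq_zero.mp this).resolve_left (by positivity)
  have hh : 0 < (1 - lam) * ((lam^2 - lam - 1) * (1 - 2*lam - lam^2 + lam^3)) := by
    rcases hcp.lt_or_gt with h | h
    · have h1 : 1 - lam < 0 := by
        by_contra hc; push_neg at hc
        have := mul_nonneg hc hk
        have := mul_neg_of_pos_of_neg (mul_pos hα hm) h
        linarith
      exact mul_pos_of_neg_of_neg h1 h
    · have h1 : 0 < 1 - lam := by
        by_contra hc; push_neg at hc
        have := mul_nonpos_of_nonpos_of_nonneg hc hk
        have := mul_pos (mul_pos hα hm) h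
        linarith
      exact mul_pos h1 h
  constructor
  · by_contra hcon
    push_neg at hcon
    rw [abs_lt] at hcon
    obtain ⟨ha, hb⟩ := hcon
    have h1 : 0 < 1 - lam := by linarith
    have hcneg : lam^2 - lam - 1 < 0 := by nlinarith
    have hppos : 0 < 1 - 2*lam - lam^2 + lam^3 := by
      nlinarith [mul_pos (by linarith : (0:ℝ) < r₂ - lam)
        (by nlinarith : (0:ℝ) < -(lam^2 + lam*r₂ + r₂^2 - lam - r₂ - 2))]
    have hfin := mul_neg_of_pos_of_neg h1 (mul_neg_of_neg_of_pos hcneg hppos)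
    linarith
  · by_contra hcon
    push_neg at hcon
    rw [lt_abs] at hcon
    rcases hcon with h | h
    · have h1 : 1 - lam < 0 := by linarith
      have hcpos : 0 < lam^2 - lam - 1 := by nlinarith
      have hppos : 0 < 1 - 2*lam - lam^2 + lam^3 := by
        have hq : (0:ℝ) < lam^2 + lam*r₃ + r₃^2 - lam - r₃ - 2 := by
          nlinarith [mul_pos (by linarith : (0:ℝ) < lam - 1.8) (by linarith : (0:ℝ) < r₃ - 1.8),
            sq_nonneg (lam - 1.8), sq_nonneg (r₃ - 1.8)]
        nlinarith [mul_pos (by linarith : (0:ℝ) < lam - r₃) hq]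
      have hfin := mul_neg_of_neg_of_pos h1 (mul_pos hcpos hppos)
      linarith
    · rw [lt_neg] at h
      have h1 : 0 < 1 - lam := by linarith
      have hcpos : 0 < lam^2 - lam - 1 := by nlinarith
      have hpneg : 1 - 2*lam - lam^2 + lam^3 < 0 := by nlinarith [sq_nonneg (lam + 1.8)]
      have hfin := mul_neg_of_pos_of_neg h1 (mul_neg_of_pos_of_neg hcpos hpneg)
      linarith

theorem stmt15
    {W U : Type*}
    [NormedAddCommGroup W] [InnerProductSpace ℝ W] [FiniteDimensional ℝ W]
    [NormedAddCommGroup U] [InnerProductSpace ℝ U] [FiniteDimensional ℝ U]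
    (M Minv : W →ₗ[ℝ] W) (K : U →ₗ[ℝ] U) (A : U →ₗ[ℝ] W) (R : U →ₗ[ℝ] U)
    (hMsym : ∀ x y : W, ⟪M x, y⟫ = ⟪x, M y⟫)
    (hMpos : ∀ x : W, x ≠ 0 → 0 < ⟪M x, x⟫)
    (hMinv : ∀ x : W, M (Minv x) = x)
    (hKsym : ∀ x y : U, ⟪K x, y⟫ = ⟪x, K y⟫)
    (hKpos : ∀ u : U, 0 ≤ ⟪K u, u⟫)
    (hR : R = (LinearMap.adjoint A).comp (Minv.comp A))
    (hKR : ∀ u : U, u ≠ 0 → 0 < ⟪K u + R u, u⟫)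
    (r₁ r₂ r₃ : ℝ) (hr₁₂ : r₁ < r₂) (hr₂₃ : r₂ < r₃)
    (hroot₁ : 1 - 2 * r₁ - r₁ ^ 2 + r₁ ^ 3 = 0)
    (hroot₂ : 1 - 2 * r₂ - r₂ ^ 2 + r₂ ^ 3 = 0)
    (hroot₃ : 1 - 2 * r₃ - r₃ ^ 2 + r₃ ^ 3 = 0)
    (α : ℝ) (hα : 0 < α) :
    (∀ (lam : ℝ) (f : W) (u : U) (w : W), ¬(f = 0 ∧ u = 0 ∧ w = 0) →
        α • M f + M w = (lam * α) • M f →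
        K u + LinearMap.adjoint A w = lam • (K u + α • R u) →
        M f + A u = (lam * α⁻¹) • M w →
        r₂ ≤ |lam| ∧ |lam| ≤ r₃) ∧
    r₃ / r₂ < 4.09 ∧
    ((∃ u₀ : U, u₀ ≠ 0 ∧ K u₀ = 0) →
      ∀ lam : ℝ, 1 - 2 * lam - lam ^ 2 + lam ^ 3 = 0 →
        ∃ (f : W) (u : U) (w : W), ¬(f = 0 ∧ u = 0 ∧ w = 0) ∧
          α • M f + M w = (lam * α) • M f ∧
          K u + LinearMap.adjoint A w = lam • (K u + α • R u) ∧
          M f + A u = (lam * α⁻¹) • M w) := by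
  obtain ⟨⟨hr2a, hr2b⟩, hr3a, hr3b⟩ := intervals15 r₁ r₂ r₃ hr₁₂ hr₂₃ hroot₁ hroot₂ hroot₃
  have Minj : ∀ x : W, M x = 0 → x = 0 := by
    intro x hx
    by_contra h0
    have h := hMpos x h0
    rw [hx, inner_zero_left] at h
    exact lt_irrefl _ h
  refine ⟨?_, ?_, ?_⟩
  · -- eigenvalue localization
    intro lam f u w hnt H1 H2 H3
    have hw : w = (α * (lam - 1)) • f := by
      have hMw : M (w - (α * (lam - 1)) • f) = 0 := by
        rw [map_sub, map_smul]
        have h1 : M w = (lam * α) • M f - α • M f := by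
          rw [← H1]; abel
        rw [h1, sub_sub, ← add_smul, sub_eq_zero]
        congr 1
        ring
      have := Minj _ hMw
      rwa [sub_eq_zero] at this
    have hAu : A u = (lam ^ 2 - lam - 1) • M f := by
      have hs : lam * α⁻¹ * (α * (lam - 1)) = lam ^ 2 - lam := by
        field_simp
      have h3 : M f + A u = (lam ^ 2 - lam) • M f := by
        rw [H3, hw, map_smul, smul_smul, hs]
      have h4 : A u = (lam ^ 2 - lam) • M f - M f := by
        rw [← h3]; abel
      rw [h4]
      match_scalars
      ring
    have hMinvAu : Minv (A u) = (lam ^ 2 - lam - 1) • f := by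
      have h0 : M (Minv (A u) - (lam ^ 2 - lam - 1) • f) = 0 := by
        rw [map_sub, map_smul, hMinv, hAu, sub_self]
      have := Minj _ h0
      rwa [sub_eq_zero] at this
    have hRu : R u = (lam ^ 2 - lam - 1) • (LinearMap.adjoint A) f := by
      rw [hR]
      simp only [LinearMap.comp_apply]
      rw [hMinvAu, map_smul]
    by_cases hf : f = 0
    · -- then w = 0 and u ≠ 0, lam = 1
      have hw0 : w = 0 := by rw [hw, hf, smul_zero]
      have hu : u ≠ 0 := fun h => hnt ⟨hf, h, hw0⟩
      have hRu0 : R u = 0 := by rw [hRu, hf, map_zero, smul_zero]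
      have hk : 0 < ⟪K u, u⟫ := by
        have := hKR u hu
        rwa [hRu0, add_zero] at this
      have h2 : K u = lam • K u := by
        have h := H2
        rwa [hw0, map_zero, add_zero, hRu0, smul_zero, add_zero] at h
      have h1 : ⟪K u, u⟫ = lam * ⟪K u, u⟫ := by
        nth_rewrite 1 [h2]
        rw [real_inner_smul_left]
      have hlam : lam = 1 := by
        have h0 : (1 - lam) * ⟪K u, u⟫ = 0 := by linear_combination h1
        rcases mul_eq_zero.mp h0 with h | h
        · linarith
        · exact absurd h (ne_of_gt hk)
      rw [hlam, abs_one]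
      constructor <;> linarith
    · have hm : 0 < ⟪M f, f⟫ := hMpos f hf
      have hk := hKpos u
      have e0 : ⟪K u + LinearMap.adjoint A w, u⟫ = ⟪lam • (K u + α • R u), u⟫ := by
        rw [H2]
      have e1 : ⟪LinearMap.adjoint A w, u⟫
          = (α * (lam - 1)) * ((lam ^ 2 - lam - 1) * ⟪M f, f⟫) := by
        rw [LinearMap.adjoint_inner_left, hw, hAu, real_inner_smul_left,
          real_inner_smul_right, real_inner_comm f]
      have e2 : ⟪lam • (K u + α • R u), u⟫
          = lam * (⟪K u, u⟫ + α * ((lam ^ 2 - lam - 1) ^ 2 * ⟪M f, f⟫)) := by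
        rw [real_inner_smul_left, inner_add_left, real_inner_smul_left, hRu,
          real_inner_smul_left, LinearMap.adjoint_inner_left, hAu,
          real_inner_smul_right, real_inner_comm f]
        ring
      rw [inner_add_left, e1, e2] at e0
      have hEsc : (1 - lam) * ⟪K u, u⟫
          = (α * ⟪M f, f⟫) * ((lam ^ 2 - lam - 1) * (1 - 2 * lam - lam ^ 2 + lam ^ 3)) := by
        linear_combination e0
      exact key15 r₂ r₃ lam _ _ α hr2a hr2b hr3a hr3b hroot₂ hroot₃ hk hm hα hEsc
  · -- condition number bound
    rw [div_lt_iff₀ (by linarith : (0:ℝ) < r₂)]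
    nlinarith
  · -- attainment
    rintro ⟨u₀, hu0, hKu0⟩ lam hp
    have hc : lam ^ 2 - lam - 1 ≠ 0 := by
      intro h
      have h1 : 1 - lam = 0 := by linear_combination hp - lam * h
      have h2 : lam = 1 := by linarith
      rw [h2] at h
      norm_num at h
    refine ⟨(lam ^ 2 - lam - 1)⁻¹ • Minv (A u₀), u₀,
      (α * (lam - 1) * (lam ^ 2 - lam - 1)⁻¹) • Minv (A u₀), ?_, ?_, ?_, ?_⟩
    · rintro ⟨-, h, -⟩; exact hu0 h
    · simp only [map_smul, hMinv, smul_smul]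
      match_scalars
      field_simp
      ring
    · rw [hR]
      simp only [LinearMap.comp_apply, map_smul, hKu0, zero_add, smul_smul]
      match_scalars
      have hc' : lam * (lam - 1) - 1 ≠ 0 := by intro h; apply hc; linear_combination h
      field_simp
      linear_combination (-1 : ℝ) * hp
    · simp only [map_smul, hMinv, smul_smul]
      match_scalars
      have hc' : lam * (lam - 1) - 1 ≠ 0 := by intro h; apply hc; linear_combination h
      field_simp
      ring
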